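/- The w-energy form has the contraction property: for every contraction function C and every ξ ∈ D_w, one has C∘ξ ∈ D_w and E_w(C∘ξ, C∘ξ) ≤ E_w(ξ, ξ). -/

import Mathlib

open MeasureTheory ProbabilityTheory
open scoped RealInnerProductSpace ENNReal

noncomputable section

/-- `Ω = {-1,1}^ℕ`, with the two-point set `{-1,1}` coded by `Bool`
(`true` codes `1`, `false` codes `-1`). -/
abbrev Omega : Type := ℕ → Bool

/-- The canonical projection `ζₙ(ω) = ω(n) ∈ {-1,1}`. -/
def zeta (n : ℕ) (ω : Omega) : ℝ := if ω n then 1 else -1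

/-- `Zₙ = (ζₙ + qₙ - pₙ)/(2√(pₙ qₙ))`, as a pointwise function on `Ω`. -/
def Zf (p : ℕ → ℝ) (n : ℕ) (ω : Omega) : ℝ :=
  (zeta n ω + (1 - p n) - p n) / (2 * Real.sqrt (p n * (1 - p n)))

/-- `Z_σ = ∏_{j∈σ} Z_j`, as a pointwise function on `Ω` (`Z_∅ = 1`). -/
def ZSf (p : ℕ → ℝ) (σ : Finset ℕ) (ω : Omega) : ℝ := ∏ j ∈ σ, Zf p j ω

lemma measurable_ZSf (p : ℕ → ℝ) (σ : Finset ℕ) : Measurable (ZSf p σ) := by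
  apply Finset.measurable_prod
  intro j _
  unfold Zf zeta
  apply Measurable.div _ measurable_const
  apply Measurable.sub _ measurable_const
  apply Measurable.add _ measurable_const
  exact (Measurable.of_discrete (f := fun b : Bool => if b = true then (1:ℝ) else -1)).comp
    (measurable_pi_apply j)

/-- A pointwise bound for `Z_j`. -/
def Mb (p : ℕ → ℝ) (j : ℕ) : ℝ :=
  max |(1 + (1 - p j) - p j) / (2 * Real.sqrt (p j * (1 - p j)))|
      |(-1 + (1 - p j) - p j) / (2 * Real.sqrt (p j * (1 - p j)))|

lemma abs_Zf_le (p : ℕ → ℝ) (j : ℕ) (ω : Omega) : |Zf p j ω| ≤ Mb p j := by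
  unfold Zf zeta Mb
  cases h : ω j
  · simpa using le_max_right _ _
  · simpa using le_max_left _ _

lemma memLp_ZSf (p : ℕ → ℝ) (P : Measure Omega) [IsProbabilityMeasure P] (σ : Finset ℕ) :
    MemLp (ZSf p σ) 2 P := by
  refine MemLp.of_bound (measurable_ZSf p σ).aestronglyMeasurable (∏ j ∈ σ, Mb p j) ?_
  filter_upwards with ω
  rw [Real.norm_eq_abs]
  calc |∏ j ∈ σ, Zf p j ω| = ∏ j ∈ σ, |Zf p j ω| := Finset.abs_prod σ _
  _ ≤ ∏ j ∈ σ, Mb p j :=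
      Finset.prod_le_prod (fun j _ => abs_nonneg _) (fun j _ => abs_Zf_le p j ω)

/-- `Z_σ` as an element of the real Hilbert space `L²(Ω, ℙ)`. -/
def ZLp (p : ℕ → ℝ) (P : Measure Omega) [IsProbabilityMeasure P] (σ : Finset ℕ) :
    Lp ℝ 2 P :=
  (memLp_ZSf p P σ).toLp _

/-- The `w`-counting measure `#_w(σ) = ∑_{j∈σ} w(j)`. -/
def cw (w : ℕ → ℝ) (σ : Finset ℕ) : ℝ := ∑ j ∈ σ, w j

/-- The domain `D_w = {ξ ∈ L²(Ω,ℙ) : ∑_{σ∈Γ} #_w(σ) |⟨Z_σ, ξ⟩|² < ∞}`. -/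
def Dw (p : ℕ → ℝ) (P : Measure Omega) [IsProbabilityMeasure P] (w : ℕ → ℝ) :
    Set (Lp ℝ 2 P) :=
  {ξ | Summable fun σ : Finset ℕ => cw w σ * ⟪ZLp p P σ, ξ⟫ ^ 2}

/-- The `w`-energy form `E_w(ξ, η) = ∑_{k=0}^∞ w(k) ⟨∂ₖξ, ∂ₖη⟩`, where `D k` plays the
role of the annihilation operator `∂ₖ`. -/
def Ew {P : Measure Omega} (w : ℕ → ℝ)
    (D : ℕ → (Lp ℝ 2 P →L[ℝ] Lp ℝ 2 P)) (ξ η : Lp ℝ 2 P) : ℝ :=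
  ∑' k, w k * ⟪D k ξ, D k η⟫

namespace EFC

def sN (p : ℕ → ℝ) (n : ℕ) : ℝ := Real.sqrt (p n * (1 - p n))

def phi (p : ℕ → ℝ) (n : ℕ) (b : Bool) : ℝ :=
  ((if b then 1 else -1) + (1 - p n) - p n) / (2 * sN p n)

lemma Zf_eq (p : ℕ → ℝ) (n : ℕ) (ω : Omega) : Zf p n ω = phi p n (ω n) := rfl

lemma measurable_phi_comp (g : ℕ → Bool → ℝ) (n : ℕ) :
    Measurable (fun ω : Omega => g n (ω n)) :=
  (Measurable.of_discrete (f := g n)).comp (measurable_pi_apply n)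

section hp
variable {p : ℕ → ℝ}

lemma sN_pos (hp : ∀ n, 0 < p n ∧ p n < 1) (n : ℕ) : 0 < sN p n :=
  Real.sqrt_pos.mpr (mul_pos (hp n).1 (by linarith [(hp n).2]))

lemma sN_sq (hp : ∀ n, 0 < p n ∧ p n < 1) (n : ℕ) : sN p n ^ 2 = p n * (1 - p n) :=
  Real.sq_sqrt (le_of_lt (mul_pos (hp n).1 (by linarith [(hp n).2])))

lemma phi_true (hp : ∀ n, 0 < p n ∧ p n < 1) (n : ℕ) : phi p n true = (1 - p n) / sN p n := by
  have h := (sN_pos hp n).ne'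
  unfold phi
  rw [if_pos rfl]
  field_simp
  ring

lemma phi_false (hp : ∀ n, 0 < p n ∧ p n < 1) (n : ℕ) : phi p n false = -(p n / sN p n) := by
  have h := (sN_pos hp n).ne'
  unfold phi
  rw [if_neg (by simp)]
  field_simp
  ring

end hp

section meas
variable {p : ℕ → ℝ} (P : Measure Omega) [IsProbabilityMeasure P]

lemma measurableSet_evalset (k : ℕ) : MeasurableSet {ω : Omega | ω k = true} := by
  have h : {ω : Omega | ω k = true} = (fun ω : Omega => ω k) ⁻¹' {true} := rfl
  rw [h]
  exact measurable_pi_apply k (measurableSet_singleton true)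

lemma integral_comp_eval
    (hdist : ∀ n, P {ω : Omega | ω n = true} = ENNReal.ofReal (p n))
    (hp : ∀ n, 0 < p n ∧ p n < 1) (g : Bool → ℝ) (k : ℕ) :
    ∫ ω, g (ω k) ∂P = p k * g true + (1 - p k) * g false := by
  have hS : MeasurableSet {ω : Omega | ω k = true} := measurableSet_evalset k
  have hpt : ∀ ω : Omega, g (ω k) =
      ({ω : Omega | ω k = true}).indicator (fun _ => g true) ω +
      ({ω : Omega | ω k = true})ᶜ.indicator (fun _ => g false) ω := by
    intro ω
    by_cases hω : ω k = true
    · simp [Set.indicator, hω]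
    · simp [Set.indicator, hω]
  have hPS : (P {ω : Omega | ω k = true}).toReal = p k := by
    rw [hdist k, ENNReal.toReal_ofReal (le_of_lt (hp k).1)]
  have hPSc : (P ({ω : Omega | ω k = true})ᶜ).toReal = 1 - p k := by
    rw [prob_compl_eq_one_sub hS, hdist k,
      ENNReal.toReal_sub_of_le (ENNReal.ofReal_le_one.mpr (le_of_lt (hp k).2)) ENNReal.one_ne_top,
      ENNReal.toReal_one, ENNReal.toReal_ofReal (le_of_lt (hp k).1)]
  calc ∫ ω, g (ω k) ∂P
      = ∫ ω, (({ω : Omega | ω k = true}).indicator (fun _ => g true) ω +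
        ({ω : Omega | ω k = true})ᶜ.indicator (fun _ => g false) ω) ∂P := by
        exact integral_congr_ae (Filter.Eventually.of_forall hpt)
    _ = p k * g true + (1 - p k) * g false := by
        rw [integral_add ((integrable_const _).indicator hS)
          ((integrable_const _).indicator hS.compl),
          integral_indicator_const _ hS, integral_indicator_const _ hS.compl,
          measureReal_def, measureReal_def, hPS, hPSc]
        simp [smul_eq_mul]

lemma integral_prod_comp
    (hindep : iIndepFun (fun n (ω : Omega) => ω n) P)
    (g : ℕ → Bool → ℝ) (s : Finset ℕ) :
    ∫ ω, ∏ j ∈ s, g j (ω j) ∂P = ∏ j ∈ s, ∫ ω, g j (ω j) ∂P := by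
  classical
  have hgind : iIndepFun
      (fun n (ω : Omega) => g n (ω n)) P :=
    hindep.comp g (fun n => Measurable.of_discrete)
  induction s using Finset.induction_on with
  | empty => simp
  | @insert i s hi ih =>
    have hIF : IndepFun (∏ j ∈ s, fun ω : Omega => g j (ω j))
        (fun ω : Omega => g i (ω i)) P :=
      hgind.indepFun_finset_prod_of_notMem (fun n => measurable_phi_comp g n) hi
    have hprodeq : (∏ j ∈ s, fun ω : Omega => g j (ω j)) = fun ω => ∏ j ∈ s, g j (ω j) := by
      funext ω; simp
    have hmul := hIF.integral_mul_eq_mul_integral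
      (by rw [hprodeq]
          exact (Finset.measurable_prod s fun n _ => measurable_phi_comp g n).aestronglyMeasurable)
      (measurable_phi_comp g i).aestronglyMeasurable
    rw [hprodeq] at hmul
    calc ∫ ω, ∏ j ∈ insert i s, g j (ω j) ∂P
        = ∫ ω, ((fun ω : Omega => ∏ j ∈ s, g j (ω j)) * fun ω : Omega => g i (ω i)) ω ∂P := by
          refine integral_congr_ae (Filter.Eventually.of_forall fun ω => ?_)
          show ∏ j ∈ insert i s, g j (ω j) = (∏ j ∈ s, g j (ω j)) * g i (ω i)
          rw [Finset.prod_insert hi, mul_comm]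
      _ = (∫ ω, ∏ j ∈ s, g j (ω j) ∂P) * ∫ ω, g i (ω i) ∂P := hmul
      _ = ∏ j ∈ insert i s, ∫ ω, g j (ω j) ∂P := by
          rw [ih, Finset.prod_insert hi, mul_comm]

end meas
end EFC

namespace EFC

lemma integral_phi {p : ℕ → ℝ} (P : Measure Omega) [IsProbabilityMeasure P]
    (hp : ∀ n, 0 < p n ∧ p n < 1)
    (hdist : ∀ n, P {ω : Omega | ω n = true} = ENNReal.ofReal (p n)) (k : ℕ) :
    ∫ ω, phi p k (ω k) ∂P = 0 := by
  rw [integral_comp_eval P hdist hp (phi p k) k, phi_true hp, phi_false hp]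
  ring

lemma integral_phi_sq {p : ℕ → ℝ} (P : Measure Omega) [IsProbabilityMeasure P]
    (hp : ∀ n, 0 < p n ∧ p n < 1)
    (hdist : ∀ n, P {ω : Omega | ω n = true} = ENNReal.ofReal (p n)) (k : ℕ) :
    ∫ ω, phi p k (ω k) * phi p k (ω k) ∂P = 1 := by
  rw [integral_comp_eval P hdist hp (fun b => phi p k b * phi p k b) k,
    phi_true hp, phi_false hp]
  have hs := (sN_pos hp k).ne'
  have hs2 := sN_sq hp k
  field_simp
  nlinarith [hs2]

lemma integral_ZSf_mul {p : ℕ → ℝ} (P : Measure Omega) [IsProbabilityMeasure P]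
    (hp : ∀ n, 0 < p n ∧ p n < 1)
    (hdist : ∀ n, P {ω : Omega | ω n = true} = ENNReal.ofReal (p n))
    (hindep : iIndepFun (fun n (ω : Omega) => ω n) P)
    (σ τ : Finset ℕ) :
    ∫ ω, ZSf p σ ω * ZSf p τ ω ∂P = if σ = τ then 1 else 0 := by
  classical
  set h : ℕ → Bool → ℝ := fun j b => phi p j b * (if j ∈ σ ∩ τ then phi p j b else 1) with hh
  have hpt : ∀ ω : Omega, ZSf p σ ω * ZSf p τ ω = ∏ j ∈ σ ∪ τ, h j (ω j) := by
    intro ω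
    have h1 : ∏ j ∈ σ ∪ τ, h j (ω j)
        = (∏ j ∈ σ ∪ τ, phi p j (ω j)) * ∏ j ∈ σ ∪ τ, (if j ∈ σ ∩ τ then phi p j (ω j) else 1) := by
      rw [← Finset.prod_mul_distrib]
    have h2 : ∏ j ∈ σ ∪ τ, (if j ∈ σ ∩ τ then phi p j (ω j) else 1)
        = ∏ j ∈ σ ∩ τ, phi p j (ω j) := by
      rw [Finset.prod_ite_mem (σ ∪ τ) (σ ∩ τ) (fun j => phi p j (ω j)),
        Finset.inter_eq_right.mpr (Finset.inter_subset_union)]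
    have h3 : (∏ j ∈ σ ∪ τ, phi p j (ω j)) * ∏ j ∈ σ ∩ τ, phi p j (ω j)
        = (∏ j ∈ σ, phi p j (ω j)) * ∏ j ∈ τ, phi p j (ω j) :=
      Finset.prod_union_inter
    rw [h1, h2, h3]
    rfl
  rw [integral_congr_ae (Filter.Eventually.of_forall hpt),
    integral_prod_comp P hindep h (σ ∪ τ)]
  by_cases hστ : σ = τ
  · subst hστ
    rw [if_pos rfl, Finset.union_self]
    apply Finset.prod_eq_one
    intro j hj
    have : h j = fun b => phi p j b * phi p j b := by
      funext b; simp only [hh]; rw [if_pos (Finset.mem_inter.mpr ⟨hj, hj⟩)]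
    rw [this]
    exact integral_phi_sq P hp hdist j
  · rw [if_neg hστ]
    have hex : ∃ j ∈ σ ∪ τ, j ∉ σ ∩ τ := by
      by_contra hcon
      push_neg at hcon
      apply hστ
      apply Finset.Subset.antisymm
      · intro j hj
        exact Finset.mem_of_mem_inter_right (hcon j (Finset.mem_union_left τ hj))
      · intro j hj
        exact Finset.mem_of_mem_inter_left (hcon j (Finset.mem_union_right σ hj))
    obtain ⟨j, hj, hj'⟩ := hex
    apply Finset.prod_eq_zero hj
    have : h j = fun b => phi p j b := by
      funext b; simp only [hh]; rw [if_neg hj', mul_one]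
    rw [this]
    exact integral_phi P hp hdist j

lemma inner_ZLp {p : ℕ → ℝ} (P : Measure Omega) [IsProbabilityMeasure P]
    (hp : ∀ n, 0 < p n ∧ p n < 1)
    (hdist : ∀ n, P {ω : Omega | ω n = true} = ENNReal.ofReal (p n))
    (hindep : iIndepFun (fun n (ω : Omega) => ω n) P)
    (σ τ : Finset ℕ) :
    ⟪ZLp p P σ, ZLp p P τ⟫ = if σ = τ then (1:ℝ) else 0 := by
  rw [L2.inner_def]
  rw [← integral_ZSf_mul P hp hdist hindep σ τ]
  apply integral_congr_ae
  have e1 : (ZLp p P σ : Omega → ℝ) =ᵐ[P] ZSf p σ := (memLp_ZSf p P σ).coeFn_toLp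
  have e2 : (ZLp p P τ : Omega → ℝ) =ᵐ[P] ZSf p τ := (memLp_ZSf p P τ).coeFn_toLp
  filter_upwards [e1, e2] with ω h1 h2
  rw [h1, h2]
  simp [mul_comm]

lemma orthonormal_ZLp {p : ℕ → ℝ} (P : Measure Omega) [IsProbabilityMeasure P]
    (hp : ∀ n, 0 < p n ∧ p n < 1)
    (hdist : ∀ n, P {ω : Omega | ω n = true} = ENNReal.ofReal (p n))
    (hindep : iIndepFun (fun n (ω : Omega) => ω n) P) :
    Orthonormal ℝ (ZLp p P) := by
  rw [orthonormal_iff_ite]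
  intro σ τ
  exact inner_ZLp P hp hdist hindep σ τ

end EFC


namespace EFC

section density
variable {p : ℕ → ℝ} (P : Measure Omega) [IsProbabilityMeasure P]

lemma inner_ZLp_eq_integral (σ : Finset ℕ) (ξ : Lp ℝ 2 P) :
    ⟪ZLp p P σ, ξ⟫ = ∫ ω, ZSf p σ ω * (ξ : Omega → ℝ) ω ∂P := by
  rw [L2.inner_def]
  apply integral_congr_ae
  have e1 : (ZLp p P σ : Omega → ℝ) =ᵐ[P] ZSf p σ := (memLp_ZSf p P σ).coeFn_toLp
  filter_upwards [e1] with ω h1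
  rw [h1]; simp [mul_comm]

lemma integrable_ZSf_mul (σ : Finset ℕ) (ξ : Lp ℝ 2 P) :
    Integrable (fun ω => ZSf p σ ω * (ξ : Omega → ℝ) ω) P := by
  have := L2.integrable_inner (𝕜 := ℝ) (ZLp p P σ) ξ
  apply this.congr
  have e1 : (ZLp p P σ : Omega → ℝ) =ᵐ[P] ZSf p σ := (memLp_ZSf p P σ).coeFn_toLp
  filter_upwards [e1] with ω h1
  rw [h1]; simp [mul_comm]

lemma integral_cylfun_mul (hp : ∀ n, 0 < p n ∧ p n < 1) (ξ : Lp ℝ 2 P)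
    (hξ : ∀ σ : Finset ℕ, ⟪ZLp p P σ, ξ⟫ = 0) (s : Finset ℕ) (g : ℕ → Bool → ℝ) :
    ∫ ω, (∏ j ∈ s, g j (ω j)) * (ξ : Omega → ℝ) ω ∂P = 0 := by
  classical
  set a : ℕ → ℝ := fun j => p j * g j true + (1 - p j) * g j false with ha
  set b : ℕ → ℝ := fun j => sN p j * (g j true - g j false) with hb
  have hgab : ∀ j (b' : Bool), g j b' = a j + b j * phi p j b' := by
    intro j b'
    have hs := (sN_pos hp j).ne'
    cases b'
    · rw [phi_false hp]
      simp only [ha, hb]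
      field_simp
      ring
    · rw [phi_true hp]
      simp only [ha, hb]
      field_simp
      ring
  have hpt : ∀ ω : Omega, (∏ j ∈ s, g j (ω j)) * (ξ : Omega → ℝ) ω
      = ∑ t ∈ s.powerset, ((∏ j ∈ t, a j) * ∏ j ∈ s \ t, b j) *
          (ZSf p (s \ t) ω * (ξ : Omega → ℝ) ω) := by
    intro ω
    have h1 : ∏ j ∈ s, g j (ω j) = ∏ j ∈ s, (a j + b j * phi p j (ω j)) := by
      apply Finset.prod_congr rfl
      intro j _
      exact hgab j (ω j)
    rw [h1, Finset.prod_add, Finset.sum_mul]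
    apply Finset.sum_congr rfl
    intro t _
    have h2 : ∏ j ∈ s \ t, (b j * phi p j (ω j))
        = (∏ j ∈ s \ t, b j) * ZSf p (s \ t) ω := by
      rw [Finset.prod_mul_distrib]
      rfl
    rw [h2]
    ring
  rw [integral_congr_ae (Filter.Eventually.of_forall hpt), integral_finset_sum]
  · apply Finset.sum_eq_zero
    intro t _
    rw [integral_const_mul, ← inner_ZLp_eq_integral, hξ, mul_zero]
  · intro t _
    exact ((integrable_ZSf_mul P (s \ t) ξ)).const_mul _

def cylSet (s : Finset ℕ) (f : ℕ → Bool) : Set Omega := {ω | ∀ j ∈ s, ω j = f j}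

lemma measurableSet_cylSet (s : Finset ℕ) (f : ℕ → Bool) : MeasurableSet (cylSet s f) := by
  have h : cylSet s f = ⋂ j ∈ s, {ω : Omega | ω j = f j} := by
    ext ω; simp [cylSet]
  rw [h]
  apply MeasurableSet.biInter (s.countable_toSet)
  intro j _
  have h2 : {ω : Omega | ω j = f j} = (fun ω : Omega => ω j) ⁻¹' {f j} := rfl
  rw [h2]
  exact measurable_pi_apply j (measurableSet_singleton (f j))

lemma setIntegral_cylSet_eq_zero (hp : ∀ n, 0 < p n ∧ p n < 1) (ξ : Lp ℝ 2 P)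
    (hξ : ∀ σ : Finset ℕ, ⟪ZLp p P σ, ξ⟫ = 0) (s : Finset ℕ) (f : ℕ → Bool) :
    ∫ ω in cylSet s f, (ξ : Omega → ℝ) ω ∂P = 0 := by
  classical
  rw [← integral_indicator (measurableSet_cylSet s f)]
  rw [← integral_cylfun_mul P hp ξ hξ s (fun j b => if b = f j then (1:ℝ) else 0)]
  apply integral_congr_ae
  apply Filter.Eventually.of_forall
  intro ω
  show Set.indicator (cylSet s f) (fun ω => (ξ : Omega → ℝ) ω) ω
      = (∏ j ∈ s, if ω j = f j then (1:ℝ) else 0) * (ξ : Omega → ℝ) ω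
  by_cases hω : ω ∈ cylSet s f
  · rw [Set.indicator_of_mem hω]
    have h1 : ∏ j ∈ s, (if ω j = f j then (1:ℝ) else 0) = 1 := by
      apply Finset.prod_eq_one
      intro j hj
      rw [if_pos (hω j hj)]
    rw [h1, one_mul]
  · rw [Set.indicator_of_notMem hω]
    simp only [cylSet, Set.mem_setOf_eq, not_forall] at hω
    obtain ⟨j, hj, hj'⟩ := hω
    have h1 : ∏ j ∈ s, (if ω j = f j then (1:ℝ) else 0) = 0 := by
      apply Finset.prod_eq_zero hj
      rw [if_neg hj']
    rw [h1, zero_mul]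

def CylSets : Set (Set Omega) := {A | ∃ s f, A = cylSet s f}

lemma isPiSystem_CylSets : IsPiSystem CylSets := by
  rintro A ⟨s, f, rfl⟩ B ⟨t, g, rfl⟩ ⟨ω₀, hω₀s, hω₀t⟩
  classical
  refine ⟨s ∪ t, fun j => if j ∈ s then f j else g j, ?_⟩
  ext ω
  simp only [Set.mem_inter_iff, cylSet, Set.mem_setOf_eq]
  constructor
  · rintro ⟨h1, h2⟩ j hj
    by_cases hjs : j ∈ s
    · rw [if_pos hjs]; exact h1 j hjs
    · rw [if_neg hjs]
      rcases Finset.mem_union.mp hj with h | h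
      · exact absurd h hjs
      · exact h2 j h
  · intro H
    constructor
    · intro j hj
      have := H j (Finset.mem_union_left t hj)
      rwa [if_pos hj] at this
    · intro j hj
      have := H j (Finset.mem_union_right s hj)
      by_cases hjs : j ∈ s
      · rw [if_pos hjs] at this
        rw [this]
        rw [← hω₀s j hjs]
        exact hω₀t j hj
      · rwa [if_neg hjs] at this

lemma generateFrom_CylSets :
    (inferInstance : MeasurableSpace Omega) = MeasurableSpace.generateFrom CylSets := by
  apply le_antisymm
  · rw [show (inferInstance : MeasurableSpace Omega) = MeasurableSpace.pi from rfl]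
    apply iSup_le
    intro k
    rw [← measurable_iff_comap_le]
    apply @measurable_to_countable' Bool Omega _ _ (MeasurableSpace.generateFrom CylSets)
    intro b
    have h : (fun ω : Omega => ω k) ⁻¹' {b} = cylSet {k} (fun _ => b) := by
      ext ω; simp [cylSet]
    rw [h]
    exact MeasurableSpace.measurableSet_generateFrom ⟨{k}, fun _ => b, rfl⟩
  · apply MeasurableSpace.generateFrom_le
    rintro A ⟨s, f, rfl⟩
    exact measurableSet_cylSet s f

lemma eq_zero_of_forall_inner_ZLp_eq_zero (hp : ∀ n, 0 < p n ∧ p n < 1) (ξ : Lp ℝ 2 P)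
    (hξ : ∀ σ : Finset ℕ, ⟪ZLp p P σ, ξ⟫ = 0) : ξ = 0 := by
  have hint : Integrable (ξ : Omega → ℝ) P := (Lp.memLp ξ).integrable one_le_two
  have htotal : ∫ ω, (ξ : Omega → ℝ) ω ∂P = 0 := by
    have := hξ ∅
    rw [inner_ZLp_eq_integral] at this
    rw [← this]
    apply integral_congr_ae
    apply Filter.Eventually.of_forall
    intro ω
    simp [ZSf]
  have hall : ∀ A : Set Omega, MeasurableSet A → ∫ ω in A, (ξ : Omega → ℝ) ω ∂P = 0 := by
    intro A hA
    refine MeasurableSpace.induction_on_inter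
      (C := fun A _ => ∫ ω in A, (ξ : Omega → ℝ) ω ∂P = 0) generateFrom_CylSets isPiSystem_CylSets
      ?_ ?_ ?_ ?_ _ hA
    · exact setIntegral_empty
    · rintro t ⟨s, f, rfl⟩
      exact setIntegral_cylSet_eq_zero P hp ξ hξ s f
    · intro t ht hint2
      have := integral_add_compl ht hint
      rw [hint2, zero_add] at this
      rw [this, htotal]
    · intro f hdisj hmeas hzero
      rw [integral_iUnion hmeas hdisj hint.integrableOn]
      simp [hzero]
  have hae : (ξ : Omega → ℝ) =ᵐ[P] 0 := by
    apply Lp.ae_eq_zero_of_forall_setIntegral_eq_zero ξ two_ne_zero ENNReal.ofNat_ne_top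
    · intro s _ _
      exact hint.integrableOn
    · intro s hs _
      exact hall s hs
  exact Lp.eq_zero_iff_ae_eq_zero.mpr hae

lemma dense_span_ZLp (hp : ∀ n, 0 < p n ∧ p n < 1)
    (hdist : ∀ n, P {ω : Omega | ω n = true} = ENNReal.ofReal (p n))
    (hindep : iIndepFun (fun n (ω : Omega) => ω n) P) :
    ⊤ ≤ (Submodule.span ℝ (Set.range (ZLp p P))).topologicalClosure := by
  rw [top_le_iff, Submodule.topologicalClosure_eq_top_iff]
  rw [Submodule.eq_bot_iff]
  intro ξ hmem
  apply eq_zero_of_forall_inner_ZLp_eq_zero P hp ξ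
  intro σ
  exact hmem (ZLp p P σ) (Submodule.subset_span (Set.mem_range_self σ))

end density
end EFC


namespace EFC
section flip
variable {p : ℕ → ℝ} (P : Measure Omega) [IsProbabilityMeasure P]

def flipTo (k : ℕ) (b : Bool) (ω : Omega) : Omega := Function.update ω k b

lemma flipTo_apply_ne (k : ℕ) (b : Bool) (ω : Omega) {j : ℕ} (hj : j ≠ k) :
    flipTo k b ω j = ω j := by
  show Function.update ω k b j = ω j
  exact Function.update_of_ne hj b ω

lemma flipTo_apply_self (k : ℕ) (b : Bool) (ω : Omega) : flipTo k b ω k = b := by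
  simp [flipTo]

lemma measurable_flipTo (k : ℕ) (b : Bool) : Measurable (flipTo k b) := by
  apply measurable_pi_iff.mpr
  intro j
  by_cases hj : j = k
  · subst hj
    have h : (fun ω : Omega => flipTo j b ω j) = fun _ => b := by
      funext ω; exact flipTo_apply_self j b ω
    rw [h]; exact measurable_const
  · have h : (fun ω : Omega => flipTo k b ω j) = fun ω : Omega => ω j := by
      funext ω; exact flipTo_apply_ne k b ω hj
    rw [h]; exact measurable_pi_apply j

lemma hdist_false (hp : ∀ n, 0 < p n ∧ p n < 1)
    (hdist : ∀ n, P {ω : Omega | ω n = true} = ENNReal.ofReal (p n)) (k : ℕ) :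
    P {ω : Omega | ω k = false} = ENNReal.ofReal (1 - p k) := by
  have h : {ω : Omega | ω k = false} = {ω : Omega | ω k = true}ᶜ := by
    ext ω; simp
  rw [h, prob_compl_eq_one_sub (measurableSet_evalset k), hdist k,
    ENNReal.ofReal_sub 1 (le_of_lt (hp k).1), ENNReal.ofReal_one]

lemma measure_eval_ne_zero (hp : ∀ n, 0 < p n ∧ p n < 1)
    (hdist : ∀ n, P {ω : Omega | ω n = true} = ENNReal.ofReal (p n)) (k : ℕ) (b : Bool) :
    P {ω : Omega | ω k = b} ≠ 0 := by
  cases b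
  · rw [hdist_false P hp hdist k]
    simp only [ne_eq, ENNReal.ofReal_eq_zero, not_le]
    linarith [(hp k).2]
  · rw [hdist k]
    simp only [ne_eq, ENNReal.ofReal_eq_zero, not_le]
    exact (hp k).1

lemma measure_preimage_flipTo_mul_le
    (hindep : iIndepFun (fun n (ω : Omega) => ω n) P)
    (k : ℕ) (b : Bool) (A : Set Omega) (hA : MeasurableSet A) :
    P (flipTo k b ⁻¹' A) * P {ω : Omega | ω k = b} ≤ P A := by
  classical
  set Mk : ℕ → MeasurableSpace Omega :=
    fun j => MeasurableSpace.comap (fun ω : Omega => ω j) inferInstance with hMk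
  have hle : ∀ j, Mk j ≤ (inferInstance : MeasurableSpace Omega) :=
    fun j => measurable_iff_comap_le.mp (measurable_pi_apply j)
  have hIndep := indep_biSup_compl hle hindep ({k}ᶜ)
  rw [compl_compl] at hIndep
  have hsingle : (⨆ j ∈ ({k} : Set ℕ), Mk j) = Mk k := by simp
  rw [hsingle] at hIndep
  have h1 : MeasurableSet[⨆ j ∈ ({k}ᶜ : Set ℕ), Mk j] (flipTo k b ⁻¹' A) := by
    have hmeas : Measurable[⨆ j ∈ ({k}ᶜ : Set ℕ), Mk j] (flipTo k b) := by
      letI : MeasurableSpace Omega := ⨆ j ∈ ({k}ᶜ : Set ℕ), Mk j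
      apply measurable_pi_iff.mpr
      intro j
      by_cases hj : j = k
      · subst hj
        have h : (fun ω : Omega => flipTo j b ω j) = fun _ => b := by
          funext ω; exact flipTo_apply_self j b ω
        rw [h]; exact measurable_const
      · have h : (fun ω : Omega => flipTo k b ω j) = fun ω : Omega => ω j := by
          funext ω; exact flipTo_apply_ne k b ω hj
        rw [h]
        apply measurable_iff_comap_le.mpr
        exact le_biSup Mk (by simp [hj])
    exact hmeas hA
  have h2 : MeasurableSet[Mk k] {ω : Omega | ω k = b} :=
    ⟨{b}, MeasurableSpace.measurableSet_top, rfl⟩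
  have hmul := (Indep_iff _ _ P).mp hIndep _ _ h1 h2
  have hinter : flipTo k b ⁻¹' A ∩ {ω : Omega | ω k = b} = A ∩ {ω : Omega | ω k = b} := by
    ext ω
    simp only [Set.mem_inter_iff, Set.mem_preimage, Set.mem_setOf_eq]
    constructor
    · rintro ⟨h3, h4⟩
      refine ⟨?_, h4⟩
      have : flipTo k b ω = ω := by
        rw [← h4]
        exact Function.update_eq_self k ω
      rwa [this] at h3
    · rintro ⟨h3, h4⟩
      refine ⟨?_, h4⟩
      have : flipTo k b ω = ω := by
        rw [← h4]
        exact Function.update_eq_self k ω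
      rwa [this]
  rw [← hmul, hinter]
  exact measure_mono Set.inter_subset_left

lemma map_flipTo_le (hp : ∀ n, 0 < p n ∧ p n < 1)
    (hdist : ∀ n, P {ω : Omega | ω n = true} = ENNReal.ofReal (p n))
    (hindep : iIndepFun (fun n (ω : Omega) => ω n) P)
    (k : ℕ) (b : Bool) :
    Measure.map (flipTo k b) P ≤ (P {ω : Omega | ω k = b})⁻¹ • P := by
  rw [Measure.le_iff]
  intro A hA
  rw [Measure.map_apply (measurable_flipTo k b) hA, Measure.smul_apply, smul_eq_mul,
    ← ENNReal.div_eq_inv_mul]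
  rw [ENNReal.le_div_iff_mul_le (Or.inl (measure_eval_ne_zero P hp hdist k b))
    (Or.inl (measure_ne_top P _))]
  exact measure_preimage_flipTo_mul_le P hindep k b A hA

lemma qmp_flipTo (hp : ∀ n, 0 < p n ∧ p n < 1)
    (hdist : ∀ n, P {ω : Omega | ω n = true} = ENNReal.ofReal (p n))
    (hindep : iIndepFun (fun n (ω : Omega) => ω n) P)
    (k : ℕ) (b : Bool) :
    Measure.QuasiMeasurePreserving (flipTo k b) P P :=
  ⟨measurable_flipTo k b,
    (Measure.absolutelyContinuous_of_le (map_flipTo_le P hp hdist hindep k b)).trans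
      Measure.smul_absolutelyContinuous⟩

lemma eLpNorm_comp_flipTo_le (hp : ∀ n, 0 < p n ∧ p n < 1)
    (hdist : ∀ n, P {ω : Omega | ω n = true} = ENNReal.ofReal (p n))
    (hindep : iIndepFun (fun n (ω : Omega) => ω n) P)
    (k : ℕ) (b : Bool) (f : Omega → ℝ) (hf : StronglyMeasurable f) :
    eLpNorm (f ∘ flipTo k b) 2 P
      ≤ (P {ω : Omega | ω k = b})⁻¹ ^ ((1:ℝ)/2) * eLpNorm f 2 P := by
  calc eLpNorm (f ∘ flipTo k b) 2 P
      = eLpNorm f 2 (Measure.map (flipTo k b) P) :=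
        (eLpNorm_map_measure hf.aestronglyMeasurable
          (measurable_flipTo k b).aemeasurable).symm
    _ ≤ eLpNorm f 2 ((P {ω : Omega | ω k = b})⁻¹ • P) :=
        eLpNorm_mono_measure f (map_flipTo_le P hp hdist hindep k b)
    _ = (P {ω : Omega | ω k = b})⁻¹ ^ ((1:ℝ)/2) * eLpNorm f 2 P := by
        rw [eLpNorm_smul_measure_of_ne_top ENNReal.ofNat_ne_top f _]
        have h12 : ((1:ℝ≥0∞)/2).toReal = (1:ℝ)/2 := by
          norm_num [ENNReal.toReal_div]
        rw [h12, smul_eq_mul]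

end flip
end EFC


namespace EFC
section T
variable {p : ℕ → ℝ} (P : Measure Omega) [IsProbabilityMeasure P]

def Tfun (p : ℕ → ℝ) (k : ℕ) (f : Omega → ℝ) (ω : Omega) : ℝ :=
  sN p k * (f (flipTo k true ω) - f (flipTo k false ω))

lemma Tfun_ZSf (hp : ∀ n, 0 < p n ∧ p n < 1) (k : ℕ) (σ : Finset ℕ) :
    Tfun p k (ZSf p σ) = fun ω => if k ∈ σ then ZSf p (σ.erase k) ω else 0 := by
  classical
  funext ω
  have hZflip : ∀ (b : Bool) (j : ℕ), j ≠ k → Zf p j (flipTo k b ω) = Zf p j ω := by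
    intro b j hj
    unfold Zf zeta
    rw [flipTo_apply_ne k b ω hj]
  by_cases hk : k ∈ σ
  · rw [if_pos hk]
    have h1 : ∀ b : Bool, ZSf p σ (flipTo k b ω) = phi p k b * ZSf p (σ.erase k) ω := by
      intro b
      unfold ZSf
      rw [← Finset.mul_prod_erase σ _ hk]
      congr 1
      · rw [Zf_eq, flipTo_apply_self]
      · apply Finset.prod_congr rfl
        intro j hj
        exact hZflip b j (Finset.ne_of_mem_erase hj)
    show sN p k * (ZSf p σ (flipTo k true ω) - ZSf p σ (flipTo k false ω)) = _
    rw [h1 true, h1 false, phi_true hp, phi_false hp]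
    have hs := (sN_pos hp k).ne'
    field_simp
    ring
  · rw [if_neg hk]
    have h1 : ∀ b : Bool, ZSf p σ (flipTo k b ω) = ZSf p σ ω := by
      intro b
      apply Finset.prod_congr rfl
      intro j hj
      exact hZflip b j (fun h => hk (h ▸ hj))
    show sN p k * (ZSf p σ (flipTo k true ω) - ZSf p σ (flipTo k false ω)) = 0
    rw [h1 true, h1 false]
    ring

lemma Tfun_congr_ae (hp : ∀ n, 0 < p n ∧ p n < 1)
    (hdist : ∀ n, P {ω : Omega | ω n = true} = ENNReal.ofReal (p n))
    (hindep : iIndepFun (fun n (ω : Omega) => ω n) P)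
    (k : ℕ) {f g : Omega → ℝ} (h : f =ᵐ[P] g) : Tfun p k f =ᵐ[P] Tfun p k g := by
  have h1 := (qmp_flipTo P hp hdist hindep k true).ae_eq_comp h
  have h2 := (qmp_flipTo P hp hdist hindep k false).ae_eq_comp h
  filter_upwards [h1, h2] with ω e1 e2
  simp only [Function.comp_apply] at e1 e2
  unfold Tfun
  rw [e1, e2]

lemma stronglyMeasurable_Tfun (k : ℕ) {f : Omega → ℝ} (hf : StronglyMeasurable f) :
    StronglyMeasurable (Tfun p k f) := by
  apply StronglyMeasurable.const_mul
  exact ((hf.measurable.comp (measurable_flipTo k true)).sub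
    (hf.measurable.comp (measurable_flipTo k false))).stronglyMeasurable

def CK (p : ℕ → ℝ) (P : Measure Omega) (k : ℕ) : ℝ≥0∞ :=
  ENNReal.ofReal (sN p k) * ((P {ω : Omega | ω k = true})⁻¹ ^ ((1:ℝ)/2)
    + (P {ω : Omega | ω k = false})⁻¹ ^ ((1:ℝ)/2))

lemma CK_ne_top (hp : ∀ n, 0 < p n ∧ p n < 1)
    (hdist : ∀ n, P {ω : Omega | ω n = true} = ENNReal.ofReal (p n)) (k : ℕ) :
    CK p P k ≠ ∞ := by
  apply ENNReal.mul_ne_top ENNReal.ofReal_ne_top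
  apply ENNReal.add_ne_top.mpr
  constructor
  · exact ENNReal.rpow_ne_top_of_nonneg (by norm_num)
      (ENNReal.inv_ne_top.mpr (measure_eval_ne_zero P hp hdist k true))
  · exact ENNReal.rpow_ne_top_of_nonneg (by norm_num)
      (ENNReal.inv_ne_top.mpr (measure_eval_ne_zero P hp hdist k false))

lemma eLpNorm_Tfun_le (hp : ∀ n, 0 < p n ∧ p n < 1)
    (hdist : ∀ n, P {ω : Omega | ω n = true} = ENNReal.ofReal (p n))
    (hindep : iIndepFun (fun n (ω : Omega) => ω n) P)
    (k : ℕ) {f : Omega → ℝ} (hf : StronglyMeasurable f) :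
    eLpNorm (Tfun p k f) 2 P ≤ CK p P k * eLpNorm f 2 P := by
  have hrw : Tfun p k f = sN p k • ((f ∘ flipTo k true) - (f ∘ flipTo k false)) := by
    funext ω; simp [Tfun]
  rw [hrw, eLpNorm_const_smul]
  have hc : ‖sN p k‖ₑ = ENNReal.ofReal (sN p k) :=
    Real.enorm_eq_ofReal (le_of_lt (sN_pos hp k))
  rw [hc]
  have hsub : eLpNorm ((f ∘ flipTo k true) - (f ∘ flipTo k false)) 2 P
      ≤ eLpNorm (f ∘ flipTo k true) 2 P + eLpNorm (f ∘ flipTo k false) 2 P :=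
    eLpNorm_sub_le
      ((hf.comp_measurable (measurable_flipTo k true)).aestronglyMeasurable)
      ((hf.comp_measurable (measurable_flipTo k false)).aestronglyMeasurable) one_le_two
  have h1 := eLpNorm_comp_flipTo_le P hp hdist hindep k true f hf
  have h2 := eLpNorm_comp_flipTo_le P hp hdist hindep k false f hf
  calc ENNReal.ofReal (sN p k) * eLpNorm ((f ∘ flipTo k true) - (f ∘ flipTo k false)) 2 P
      ≤ ENNReal.ofReal (sN p k) *
        (eLpNorm (f ∘ flipTo k true) 2 P + eLpNorm (f ∘ flipTo k false) 2 P) :=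
        mul_le_mul_right hsub _
    _ ≤ ENNReal.ofReal (sN p k) *
        ((P {ω : Omega | ω k = true})⁻¹ ^ ((1:ℝ)/2) * eLpNorm f 2 P
          + (P {ω : Omega | ω k = false})⁻¹ ^ ((1:ℝ)/2) * eLpNorm f 2 P) :=
        mul_le_mul_right (add_le_add h1 h2) _
    _ = CK p P k * eLpNorm f 2 P := by
        unfold CK
        ring

lemma memLp_Tfun (hp : ∀ n, 0 < p n ∧ p n < 1)
    (hdist : ∀ n, P {ω : Omega | ω n = true} = ENNReal.ofReal (p n))
    (hindep : iIndepFun (fun n (ω : Omega) => ω n) P)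
    (k : ℕ) {f : Omega → ℝ} (hf : StronglyMeasurable f) (hmem : MemLp f 2 P) :
    MemLp (Tfun p k f) 2 P := by
  refine ⟨(stronglyMeasurable_Tfun k hf).aestronglyMeasurable, ?_⟩
  apply lt_of_le_of_lt (eLpNorm_Tfun_le P hp hdist hindep k hf)
  exact ENNReal.mul_lt_top (lt_of_le_of_ne le_top (CK_ne_top P hp hdist k)) hmem.2

def Tlin (hp : ∀ n, 0 < p n ∧ p n < 1)
    (hdist : ∀ n, P {ω : Omega | ω n = true} = ENNReal.ofReal (p n))
    (hindep : iIndepFun (fun n (ω : Omega) => ω n) P)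
    (k : ℕ) : Lp ℝ 2 P →ₗ[ℝ] Lp ℝ 2 P where
  toFun ζ := (memLp_Tfun P hp hdist hindep k (Lp.stronglyMeasurable ζ) (Lp.memLp ζ)).toLp
    (Tfun p k (ζ : Omega → ℝ))
  map_add' ζ₁ ζ₂ := by
    rw [← MemLp.toLp_add, MemLp.toLp_eq_toLp_iff]
    have h := Lp.coeFn_add ζ₁ ζ₂
    have h1 := (qmp_flipTo P hp hdist hindep k true).ae_eq_comp h
    have h2 := (qmp_flipTo P hp hdist hindep k false).ae_eq_comp h
    filter_upwards [h1, h2] with ω e1 e2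
    simp only [Function.comp_apply, Pi.add_apply] at e1 e2
    show Tfun p k (((ζ₁ + ζ₂) : Lp ℝ 2 P) : Omega → ℝ) ω
      = Tfun p k (ζ₁ : Omega → ℝ) ω + Tfun p k (ζ₂ : Omega → ℝ) ω
    unfold Tfun
    rw [e1, e2]
    ring
  map_smul' c ζ := by
    simp only [RingHom.id_apply]
    rw [← MemLp.toLp_const_smul, MemLp.toLp_eq_toLp_iff]
    have h := Lp.coeFn_smul c ζ
    have h1 := (qmp_flipTo P hp hdist hindep k true).ae_eq_comp h
    have h2 := (qmp_flipTo P hp hdist hindep k false).ae_eq_comp h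
    filter_upwards [h1, h2] with ω e1 e2
    simp only [Function.comp_apply, Pi.smul_apply, smul_eq_mul] at e1 e2
    show Tfun p k ((c • ζ : Lp ℝ 2 P) : Omega → ℝ) ω = c * Tfun p k (ζ : Omega → ℝ) ω
    unfold Tfun
    rw [e1, e2]
    ring

def Tclm (hp : ∀ n, 0 < p n ∧ p n < 1)
    (hdist : ∀ n, P {ω : Omega | ω n = true} = ENNReal.ofReal (p n))
    (hindep : iIndepFun (fun n (ω : Omega) => ω n) P)
    (k : ℕ) : Lp ℝ 2 P →L[ℝ] Lp ℝ 2 P :=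
  LinearMap.mkContinuous (Tlin P hp hdist hindep k) (CK p P k).toReal (by
    intro ζ
    show ‖(memLp_Tfun P hp hdist hindep k (Lp.stronglyMeasurable ζ) (Lp.memLp ζ)).toLp
      (Tfun p k (ζ : Omega → ℝ))‖ ≤ _
    rw [Lp.norm_toLp]
    have hb := eLpNorm_Tfun_le P hp hdist hindep k (Lp.stronglyMeasurable ζ)
    have hfin : CK p P k * eLpNorm (ζ : Omega → ℝ) 2 P ≠ ∞ :=
      ENNReal.mul_ne_top (CK_ne_top P hp hdist k) (Lp.eLpNorm_ne_top ζ)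
    calc (eLpNorm (Tfun p k (ζ : Omega → ℝ)) 2 P).toReal
        ≤ (CK p P k * eLpNorm (ζ : Omega → ℝ) 2 P).toReal := ENNReal.toReal_mono hfin hb
      _ = (CK p P k).toReal * ‖ζ‖ := by
          rw [ENNReal.toReal_mul, Lp.norm_def])

lemma Tclm_apply (hp : ∀ n, 0 < p n ∧ p n < 1)
    (hdist : ∀ n, P {ω : Omega | ω n = true} = ENNReal.ofReal (p n))
    (hindep : iIndepFun (fun n (ω : Omega) => ω n) P)
    (k : ℕ) (ζ : Lp ℝ 2 P) :
    Tclm P hp hdist hindep k ζ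
      = (memLp_Tfun P hp hdist hindep k (Lp.stronglyMeasurable ζ) (Lp.memLp ζ)).toLp
        (Tfun p k (ζ : Omega → ℝ)) := rfl

set_option synthInstance.maxHeartbeats 1000000 in
lemma D_eq_Tclm (hp : ∀ n, 0 < p n ∧ p n < 1)
    (hdist : ∀ n, P {ω : Omega | ω n = true} = ENNReal.ofReal (p n))
    (hindep : iIndepFun (fun n (ω : Omega) => ω n) P)
    (D : ℕ → (Lp ℝ 2 P →L[ℝ] Lp ℝ 2 P))
    (hD : ∀ (k : ℕ) (σ : Finset ℕ),
      D k (ZLp p P σ) = if k ∈ σ then ZLp p P (σ.erase k) else 0)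
    (k : ℕ) : D k = Tclm P hp hdist hindep k := by
  classical
  have hdense : Dense ((Submodule.span ℝ (Set.range (ZLp p P)) : Submodule ℝ (Lp ℝ 2 P))
      : Set (Lp ℝ 2 P)) :=
    Submodule.dense_iff_topologicalClosure_eq_top.mpr
      (top_unique (dense_span_ZLp P hp hdist hindep))
  apply ContinuousLinearMap.ext_on hdense
  rintro x ⟨σ, rfl⟩
  rw [hD k σ, Tclm_apply]
  have hae : Tfun p k ((ZLp p P σ : Lp ℝ 2 P) : Omega → ℝ) =ᵐ[P] Tfun p k (ZSf p σ) :=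
    Tfun_congr_ae P hp hdist hindep k (memLp_ZSf p P σ).coeFn_toLp
  by_cases hk : k ∈ σ
  · rw [if_pos hk]
    show (memLp_ZSf p P (σ.erase k)).toLp (ZSf p (σ.erase k)) = _
    rw [MemLp.toLp_eq_toLp_iff]
    refine Filter.EventuallyEq.symm (hae.trans ?_)
    rw [Tfun_ZSf hp k σ]
    apply Filter.Eventually.of_forall
    intro ω
    show (if k ∈ σ then ZSf p (σ.erase k) ω else 0) = ZSf p (σ.erase k) ω
    rw [if_pos hk]
  · rw [if_neg hk]
    have h0 : Tfun p k ((ZLp p P σ : Lp ℝ 2 P) : Omega → ℝ) =ᵐ[P] (0 : Omega → ℝ) := by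
      refine hae.trans ?_
      rw [Tfun_ZSf hp k σ]
      apply Filter.Eventually.of_forall
      intro ω
      show (if k ∈ σ then ZSf p (σ.erase k) ω else 0) = 0
      rw [if_neg hk]
    symm
    rw [← MemLp.toLp_zero (MemLp.zero (p := 2) (μ := P) (ε := ℝ)), MemLp.toLp_eq_toLp_iff]
    exact h0

end T
end EFC


namespace EFC
section basis
variable {p : ℕ → ℝ} (P : Measure Omega) [IsProbabilityMeasure P]

set_option synthInstance.maxHeartbeats 1000000 in
def Zbasis (hp : ∀ n, 0 < p n ∧ p n < 1)
    (hdist : ∀ n, P {ω : Omega | ω n = true} = ENNReal.ofReal (p n))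
    (hindep : iIndepFun (fun n (ω : Omega) => ω n) P) :
    HilbertBasis (Finset ℕ) ℝ (Lp ℝ 2 P) :=
  HilbertBasis.mk (orthonormal_ZLp P hp hdist hindep) (dense_span_ZLp P hp hdist hindep)

lemma Zbasis_apply (hp : ∀ n, 0 < p n ∧ p n < 1)
    (hdist : ∀ n, P {ω : Omega | ω n = true} = ENNReal.ofReal (p n))
    (hindep : iIndepFun (fun n (ω : Omega) => ω n) P)
    (σ : Finset ℕ) : Zbasis P hp hdist hindep σ = ZLp p P σ :=
  congrFun (HilbertBasis.coe_mk (orthonormal_ZLp P hp hdist hindep)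
    (dense_span_ZLp P hp hdist hindep)) σ

lemma inner_D_apply (hp : ∀ n, 0 < p n ∧ p n < 1)
    (hdist : ∀ n, P {ω : Omega | ω n = true} = ENNReal.ofReal (p n))
    (hindep : iIndepFun (fun n (ω : Omega) => ω n) P)
    (D : ℕ → (Lp ℝ 2 P →L[ℝ] Lp ℝ 2 P))
    (hD : ∀ (k : ℕ) (σ : Finset ℕ),
      D k (ZLp p P σ) = if k ∈ σ then ZLp p P (σ.erase k) else 0)
    (k : ℕ) (τ : Finset ℕ) (ζ : Lp ℝ 2 P) :
    ⟪ZLp p P τ, D k ζ⟫ = if k ∈ τ then 0 else ⟪ZLp p P (insert k τ), ζ⟫ := by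
  classical
  set b := Zbasis P hp hdist hindep with hb
  have hsum := b.hasSum_repr ζ
  have h2 := (D k).hasSum hsum
  have h3 := (innerSL ℝ (ZLp p P τ)).hasSum h2
  simp only [innerSL_apply_apply] at h3
  have hterm : ∀ σ : Finset ℕ, ⟪ZLp p P τ, D k (b.repr ζ σ • b σ)⟫
      = if σ = insert k τ ∧ k ∉ τ then ⟪ZLp p P (insert k τ), ζ⟫ else 0 := by
    intro σ
    rw [Zbasis_apply P hp hdist hindep σ, ContinuousLinearMap.map_smul, real_inner_smul_right, hD k σ]
    by_cases hkσ : k ∈ σ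
    · rw [if_pos hkσ, inner_ZLp P hp hdist hindep τ (σ.erase k)]
      by_cases hτ : τ = σ.erase k
      · have hkτ : k ∉ τ := by rw [hτ]; exact Finset.notMem_erase k σ
        have hσ : σ = insert k τ := by rw [hτ, Finset.insert_erase hkσ]
        rw [if_pos hτ, if_pos ⟨hσ, hkτ⟩, mul_one]
        rw [b.repr_apply_apply, hσ]
        have hbz : b (insert k τ) = ZLp p P (insert k τ) := Zbasis_apply P hp hdist hindep _
        rw [hbz]
      · rw [if_neg hτ, mul_zero]
        rw [if_neg]
        rintro ⟨hσ, hkτ⟩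
        apply hτ
        rw [hσ, Finset.erase_insert hkτ]
    · rw [if_neg hkσ, inner_zero_right, mul_zero]
      rw [if_neg]
      rintro ⟨hσ, _⟩
      apply hkσ
      rw [hσ]
      exact Finset.mem_insert_self k τ
  by_cases hkτ : k ∈ τ
  · rw [if_pos hkτ]
    have hzero : (fun σ : Finset ℕ => ⟪ZLp p P τ, D k (b.repr ζ σ • b σ)⟫)
        = fun _ => (0 : ℝ) := by
      funext σ
      rw [hterm σ, if_neg]
      rintro ⟨_, h⟩
      exact h hkτ
    rw [hzero] at h3
    exact (h3.unique hasSum_zero).symm ▸ rfl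
  · rw [if_neg hkτ]
    have hite : (fun σ : Finset ℕ => ⟪ZLp p P τ, D k (b.repr ζ σ • b σ)⟫)
        = fun σ => if σ = insert k τ then ⟪ZLp p P (insert k τ), ζ⟫ else 0 := by
      funext σ
      rw [hterm σ]
      by_cases hσ : σ = insert k τ
      · rw [if_pos ⟨hσ, hkτ⟩, if_pos hσ]
      · rw [if_neg (fun h => hσ h.1), if_neg hσ]
    rw [hite] at h3
    exact h3.unique (hasSum_ite_eq (insert k τ) _)

lemma hasSum_normsq (hp : ∀ n, 0 < p n ∧ p n < 1)
    (hdist : ∀ n, P {ω : Omega | ω n = true} = ENNReal.ofReal (p n))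
    (hindep : iIndepFun (fun n (ω : Omega) => ω n) P)
    (x : Lp ℝ 2 P) :
    HasSum (fun τ : Finset ℕ => ⟪ZLp p P τ, x⟫ ^ 2) (‖x‖ ^ 2) := by
  have h := (Zbasis P hp hdist hindep).hasSum_inner_mul_inner x x
  have heq : (fun τ : Finset ℕ =>
      ⟪x, Zbasis P hp hdist hindep τ⟫ * ⟪Zbasis P hp hdist hindep τ, x⟫)
      = fun τ : Finset ℕ => ⟪ZLp p P τ, x⟫ ^ 2 := by
    funext τ
    rw [Zbasis_apply P hp hdist hindep τ, real_inner_comm x, sq]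
  rw [heq] at h
  rwa [real_inner_self_eq_norm_sq] at h
end basis
end EFC


namespace EFC

lemma summable_of_tsum_ofReal_ne_top {ι : Type*} {f : ι → ℝ} (hf : ∀ i, 0 ≤ f i)
    (h : ∑' i, ENNReal.ofReal (f i) ≠ ∞) : Summable f := by
  have h1 : ∀ i, ENNReal.ofReal (f i) = ((f i).toNNReal : ℝ≥0∞) := fun i => rfl
  simp only [h1] at h
  have h2 := ENNReal.tsum_coe_ne_top_iff_summable.mp h
  have h3 := NNReal.summable_coe.mpr h2
  exact h3.congr fun i => Real.coe_toNNReal _ (hf i)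

section master
variable {p : ℕ → ℝ} (P : Measure Omega) [IsProbabilityMeasure P]

lemma ennreal_master (hp : ∀ n, 0 < p n ∧ p n < 1)
    (hdist : ∀ n, P {ω : Omega | ω n = true} = ENNReal.ofReal (p n))
    (hindep : iIndepFun (fun n (ω : Omega) => ω n) P)
    (D : ℕ → (Lp ℝ 2 P →L[ℝ] Lp ℝ 2 P))
    (hD : ∀ (k : ℕ) (σ : Finset ℕ),
      D k (ZLp p P σ) = if k ∈ σ then ZLp p P (σ.erase k) else 0)
    (w : ℕ → ℝ) (hw : ∀ n, 0 ≤ w n) (ζ : Lp ℝ 2 P) :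
    ∑' σ : Finset ℕ, ENNReal.ofReal (cw w σ * ⟪ZLp p P σ, ζ⟫ ^ 2)
      = ∑' k : ℕ, ENNReal.ofReal (w k * ‖D k ζ‖ ^ 2) := by
  classical
  have step1 : ∀ σ : Finset ℕ, ENNReal.ofReal (cw w σ * ⟪ZLp p P σ, ζ⟫ ^ 2)
      = ∑' k : ℕ, (if k ∈ σ then ENNReal.ofReal (w k * ⟪ZLp p P σ, ζ⟫ ^ 2) else 0) := by
    intro σ
    rw [tsum_eq_sum (s := σ) (fun k hk => if_neg hk)]
    have e1 : ∑ k ∈ σ, (if k ∈ σ then ENNReal.ofReal (w k * ⟪ZLp p P σ, ζ⟫ ^ 2) else 0)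
        = ∑ k ∈ σ, ENNReal.ofReal (w k * ⟪ZLp p P σ, ζ⟫ ^ 2) :=
      Finset.sum_congr rfl (fun k hk => if_pos hk)
    have e2 : cw w σ * ⟪ZLp p P σ, ζ⟫ ^ 2 = ∑ k ∈ σ, w k * ⟪ZLp p P σ, ζ⟫ ^ 2 := by
      rw [cw, Finset.sum_mul]
    rw [e1, e2]
    exact ENNReal.ofReal_sum_of_nonneg (fun i _ => mul_nonneg (hw i) (sq_nonneg _))
  rw [tsum_congr step1, ENNReal.tsum_comm]
  apply tsum_congr
  intro k
  have hns := hasSum_normsq P hp hdist hindep (D k ζ)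
  have hsum : Summable (fun τ : Finset ℕ => w k * ⟪ZLp p P τ, D k ζ⟫ ^ 2) :=
    (hns.summable).mul_left (w k)
  have h4 : ENNReal.ofReal (w k * ‖D k ζ‖ ^ 2)
      = ∑' τ : Finset ℕ, ENNReal.ofReal (w k * ⟪ZLp p P τ, D k ζ⟫ ^ 2) := by
    rw [← hns.tsum_eq, ← tsum_mul_left,
      ENNReal.ofReal_tsum_of_nonneg (fun τ => mul_nonneg (hw k) (sq_nonneg _)) hsum]
  rw [h4]
  have hinv : Function.Involutive
      (fun σ : Finset ℕ => if k ∈ σ then σ.erase k else insert k σ) := by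
    intro σ
    by_cases hk : k ∈ σ
    · simp only [if_pos hk, if_neg (Finset.notMem_erase k σ)]
      exact Finset.insert_erase hk
    · simp only [if_neg hk, if_pos (Finset.mem_insert_self k σ)]
      exact Finset.erase_insert hk
  have he := (hinv.toPerm _).tsum_eq
    (f := fun σ : Finset ℕ => if k ∈ σ then ENNReal.ofReal (w k * ⟪ZLp p P σ, ζ⟫ ^ 2) else 0)
  rw [← he]
  apply tsum_congr
  intro τ
  have hco : (hinv.toPerm _) τ = if k ∈ τ then τ.erase k else insert k τ :=
    congrFun (hinv.coe_toPerm) τ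
  rw [hco]
  by_cases hkτ : k ∈ τ
  · rw [if_pos hkτ, if_neg (Finset.notMem_erase k τ),
      inner_D_apply P hp hdist hindep D hD k τ ζ, if_pos hkτ]
    simp
  · rw [if_neg hkτ, if_pos (Finset.mem_insert_self k τ),
      inner_D_apply P hp hdist hindep D hD k τ ζ, if_neg hkτ]

end master
end EFC

theorem energy_form_contraction_property
    (p : ℕ → ℝ) (P : Measure Omega) [IsProbabilityMeasure P]
    (hp : ∀ n, 0 < p n ∧ p n < 1)
    (hdist : ∀ n, P {ω : Omega | ω n = true} = ENNReal.ofReal (p n))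
    (hindep : iIndepFun (fun n (ω : Omega) => ω n) P)
    (D : ℕ → (Lp ℝ 2 P →L[ℝ] Lp ℝ 2 P))
    (hD : ∀ (k : ℕ) (σ : Finset ℕ),
      D k (ZLp p P σ) = if k ∈ σ then ZLp p P (σ.erase k) else 0)
    (w : ℕ → ℝ) (hw : ∀ n, 0 ≤ w n)
    (C : ℝ → ℝ) (hC0 : C 0 = 0) (hC : ∀ s t : ℝ, |C s - C t| ≤ |s - t|)
    (ξ : Lp ℝ 2 P) (hξ : ξ ∈ Dw p P w) :
    ∃ hmem : MemLp (fun ω => C ((ξ : Omega → ℝ) ω)) 2 P,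
      hmem.toLp _ ∈ Dw p P w ∧
      Ew w D (hmem.toLp _) (hmem.toLp _) ≤ Ew w D ξ ξ := by
  classical
  open EFC in
  have hlip : LipschitzWith 1 C := by
    apply LipschitzWith.of_dist_le_mul
    intro x y
    rw [Real.dist_eq, Real.dist_eq, NNReal.coe_one, one_mul]
    exact hC x y
  have hmeasC : AEStronglyMeasurable (fun ω => C ((ξ : Omega → ℝ) ω)) P :=
    hlip.continuous.comp_aestronglyMeasurable (Lp.aestronglyMeasurable ξ)
  have hboundC : ∀ ω, ‖C ((ξ : Omega → ℝ) ω)‖ ≤ ‖(ξ : Omega → ℝ) ω‖ := by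
    intro ω
    rw [Real.norm_eq_abs, Real.norm_eq_abs]
    have h := hC ((ξ : Omega → ℝ) ω) 0
    rw [hC0, sub_zero, sub_zero] at h
    exact h
  have hmem : MemLp (fun ω => C ((ξ : Omega → ℝ) ω)) 2 P :=
    MemLp.of_le (Lp.memLp ξ) hmeasC (Filter.Eventually.of_forall hboundC)
  refine ⟨hmem, ?_, ?_⟩
  all_goals {
    set η := hmem.toLp (fun ω => C ((ξ : Omega → ℝ) ω)) with hη
    have hDT : ∀ k, D k = Tclm P hp hdist hindep k :=
      fun k => D_eq_Tclm P hp hdist hindep D hD k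
    have hηle : ∀ k, ‖D k η‖ ≤ ‖D k ξ‖ := by
      intro k
      rw [hDT k, Tclm_apply, Tclm_apply, Lp.norm_toLp, Lp.norm_toLp]
      apply ENNReal.toReal_mono
        (memLp_Tfun P hp hdist hindep k (Lp.stronglyMeasurable ξ) (Lp.memLp ξ)).2.ne
      have hae : Tfun p k (η : Omega → ℝ) =ᵐ[P] Tfun p k (fun ω => C ((ξ : Omega → ℝ) ω)) :=
        Tfun_congr_ae P hp hdist hindep k (MemLp.coeFn_toLp hmem)
      rw [eLpNorm_congr_ae hae]
      apply eLpNorm_mono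
      intro ω
      show ‖sN p k * (C ((ξ : Omega → ℝ) (flipTo k true ω))
          - C ((ξ : Omega → ℝ) (flipTo k false ω)))‖ ≤ ‖sN p k * _‖
      rw [Real.norm_eq_abs, Real.norm_eq_abs, abs_mul, abs_mul]
      exact mul_le_mul_of_nonneg_left (hC _ _) (abs_nonneg _)
    have hble : ∀ k, w k * ‖D k η‖ ^ 2 ≤ w k * ‖D k ξ‖ ^ 2 := fun k =>
      mul_le_mul_of_nonneg_left (pow_le_pow_left₀ (norm_nonneg _) (hηle k) 2) (hw k)
    have hξsum : Summable (fun σ : Finset ℕ => cw w σ * ⟪ZLp p P σ, ξ⟫ ^ 2) := hξ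
    have hcwnn : ∀ σ : Finset ℕ, 0 ≤ cw w σ :=
      fun σ => Finset.sum_nonneg (fun j _ => hw j)
    have hnnξ : ∀ σ : Finset ℕ, 0 ≤ cw w σ * ⟪ZLp p P σ, ξ⟫ ^ 2 :=
      fun σ => mul_nonneg (hcwnn σ) (sq_nonneg _)
    have hnnη : ∀ σ : Finset ℕ, 0 ≤ cw w σ * ⟪ZLp p P σ, η⟫ ^ 2 :=
      fun σ => mul_nonneg (hcwnn σ) (sq_nonneg _)
    have hMξ := ennreal_master P hp hdist hindep D hD w hw ξ
    have hMη := ennreal_master P hp hdist hindep D hD w hw η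
    have hfin : ∑' σ : Finset ℕ, ENNReal.ofReal (cw w σ * ⟪ZLp p P σ, ξ⟫ ^ 2) ≠ ∞ := by
      rw [← ENNReal.ofReal_tsum_of_nonneg hnnξ hξsum]
      exact ENNReal.ofReal_ne_top
    have hafin : ∑' k : ℕ, ENNReal.ofReal (w k * ‖D k ξ‖ ^ 2) ≠ ∞ := by
      rw [← hMξ]; exact hfin
    have hasum : Summable (fun k => w k * ‖D k ξ‖ ^ 2) :=
      summable_of_tsum_ofReal_ne_top (fun k => mul_nonneg (hw k) (sq_nonneg _)) hafin
    have hbsum : Summable (fun k => w k * ‖D k η‖ ^ 2) :=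
      Summable.of_nonneg_of_le (fun k => mul_nonneg (hw k) (sq_nonneg _)) hble hasum
    first
    | · -- membership in Dw
        show Summable (fun σ : Finset ℕ => cw w σ * ⟪ZLp p P σ, η⟫ ^ 2)
        apply summable_of_tsum_ofReal_ne_top hnnη
        rw [hMη]
        exact ne_top_of_le_ne_top hafin
          (ENNReal.tsum_le_tsum (fun k => ENNReal.ofReal_le_ofReal (hble k)))
    | · -- energy inequality
        have hEη : Ew w D η η = ∑' k, w k * ‖D k η‖ ^ 2 := by
          apply tsum_congr
          intro k
          rw [real_inner_self_eq_norm_sq]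
        have hEξ : Ew w D ξ ξ = ∑' k, w k * ‖D k ξ‖ ^ 2 := by
          apply tsum_congr
          intro k
          rw [real_inner_self_eq_norm_sq]
        rw [hEη, hEξ]
        exact Summable.tsum_le_tsum hble hbsum hasum
  }


end
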